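/- Let $F$ be a number field. Suppose there exists $f \in F \otimes_{\mathbb{Q}} \mathbb{R}$ such that $\mathrm{Tr}_{(F \otimes_{\mathbb{Q}} \mathbb{R})/\mathbb{R}}(f \cdot x^2) > 0$ for every nonzero $x \in F \otimes_{\mathbb{Q}} \mathbb{R}$. Then $F$ is totally real. -/

import Mathlib

open scoped TensorProduct
attribute [local instance] Algebra.TensorProduct.rightAlgebra

noncomputable def commE (F : Type*) [Field F] [NumberField F] :
    (F ⊗[ℚ] ℝ) ≃ₐ[ℝ] (ℝ ⊗[ℚ] F) :=
  AlgEquiv.ofRingEquiv (f := (Algebra.TensorProduct.comm ℚ F ℝ).toRingEquiv)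
    (fun r => by simp [Algebra.TensorProduct.algebraMap_apply]; rfl)

set_option maxHeartbeats 1000000 in
theorem stmt_5 (F : Type*) [Field F] [NumberField F]
    (f : F ⊗[ℚ] ℝ)
    (hf : ∀ x : F ⊗[ℚ] ℝ, x ≠ 0 → 0 < Algebra.trace ℝ (F ⊗[ℚ] ℝ) (f * x ^ 2)) :
    ∀ σ : F →+* ℂ, ∀ a : F, (σ a).im = 0 := by
  intro σ a
  have key : ∀ x : F ⊗[ℚ] ℝ, x ≠ 0 → 0 < Algebra.trace ℝ (F ⊗[ℚ] ℝ) (f * x * x) := by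
    intro x hx
    have := hf x hx
    rwa [pow_two, ← mul_assoc] at this
  let core : InnerProductSpace.Core ℝ (F ⊗[ℚ] ℝ) :=
    { inner := fun x y => Algebra.trace ℝ (F ⊗[ℚ] ℝ) (f * x * y)
      conj_inner_symm := fun x y => by
        simp only [starRingEnd_apply, star_trivial]
        ring_nf
      re_inner_nonneg := fun x => by
        rcases eq_or_ne x 0 with rfl | hx
        · simp
        · exact le_of_lt (by simpa using key x hx)
      add_left := fun x y z => by
        simp only [mul_add, add_mul, map_add]
      smul_left := fun x y r => by
        simp only [starRingEnd_apply, star_trivial]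
        have h1 : f * (r • x) * y = r • (f * x * y) := by
          rw [Algebra.smul_def, Algebra.smul_def]; ring
        rw [h1, map_smul, smul_eq_mul]
      definite := fun x hx => by
        by_contra h
        exact (key x h).ne' (by simpa using hx) }
  letI : NormedAddCommGroup (F ⊗[ℚ] ℝ) := core.toNormedAddCommGroup
  letI : InnerProductSpace ℝ (F ⊗[ℚ] ℝ) := InnerProductSpace.ofCore core.toCore
  haveI : FiniteDimensional ℝ (F ⊗[ℚ] ℝ) := Module.Finite.equiv (commE F).symm.toLinearEquiv
  set c : F ⊗[ℚ] ℝ := a ⊗ₜ[ℚ] (1:ℝ) with hc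
  let T : (F ⊗[ℚ] ℝ) →ₗ[ℝ] (F ⊗[ℚ] ℝ) := LinearMap.mulLeft ℝ c
  have hT : T.IsSymmetric := by
    intro x y
    show Algebra.trace ℝ (F ⊗[ℚ] ℝ) (f * (c * x) * y)
        = Algebra.trace ℝ (F ⊗[ℚ] ℝ) (f * x * (c * y))
    ring_nf
  obtain ⟨n, hn⟩ : ∃ n, Module.finrank ℝ (F ⊗[ℚ] ℝ) = n := ⟨_, rfl⟩
  let b := hT.eigenvectorBasis hn
  let μ := hT.eigenvalues hn
  have heig : ∀ i, c * (b i) = (μ i) • (b i) := by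
    intro i
    have h := (hT.hasEigenvector_eigenvectorBasis hn i).apply_eq_smul
    have h2 : T (b i) = (μ i) • (b i) := by exact_mod_cast h
    rw [← h2]; rfl
  have hzero : (∏ i : Fin n, (c - algebraMap ℝ (F ⊗[ℚ] ℝ) (μ i))) = 0 := by
    have hL : LinearMap.mulLeft ℝ (∏ i : Fin n, (c - algebraMap ℝ (F ⊗[ℚ] ℝ) (μ i))) = 0 := by
      apply b.toBasis.ext
      intro i
      rw [← Finset.mul_prod_erase Finset.univ _ (Finset.mem_univ i)]
      simp only [LinearMap.mulLeft_apply, OrthonormalBasis.coe_toBasis, LinearMap.zero_apply]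
      rw [mul_comm (c - algebraMap ℝ (F ⊗[ℚ] ℝ) (μ i)), mul_assoc]
      have h0 : (c - algebraMap ℝ (F ⊗[ℚ] ℝ) (μ i)) * (b i) = 0 := by
        rw [sub_mul, heig i, Algebra.smul_def, sub_self]
      rw [h0, mul_zero]
    have h1 := congrArg (fun L => L 1) hL
    simpa only [LinearMap.mulLeft_apply, LinearMap.zero_apply, mul_one] using h1
  let φ : (F ⊗[ℚ] ℝ) →ₐ[ℚ] ℂ :=
    Algebra.TensorProduct.productMap
      (RingHom.equivRatAlgHom _ _ σ)
      (RingHom.equivRatAlgHom _ _ (algebraMap ℝ ℂ))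
  have hφ := congrArg φ hzero
  rw [map_prod, map_zero] at hφ
  obtain ⟨i, -, hi⟩ := Finset.prod_eq_zero_iff.mp hφ
  rw [map_sub, sub_eq_zero] at hi
  have h1 : φ c = σ a := by
    simp only [φ, hc, RingHom.equivRatAlgHom, RingEquiv.coe_mk, Equiv.coe_fn_mk,
      Algebra.TensorProduct.productMap_apply_tmul, map_one, mul_one]
    rfl
  have h2 : φ (algebraMap ℝ (F ⊗[ℚ] ℝ) (μ i)) = ((μ i : ℝ) : ℂ) := by
    show φ ((1:F) ⊗ₜ[ℚ] (μ i)) = _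
    simp only [φ, RingHom.equivRatAlgHom, RingEquiv.coe_mk, Equiv.coe_fn_mk,
      Algebra.TensorProduct.productMap_apply_tmul, map_one, one_mul]
    rfl
  rw [h1, h2] at hi
  rw [hi, Complex.ofReal_im]
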